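/- Let Γ be a finite directed multigraph, let (T, r, β) be a rooted tree decomposition of Γ whose root bag is empty (β(r) = ∅), and for each vertex v let fb(v) denote its unique forget bag. Let W be a nonempty set of vertices of Γ that is connected in the underlying undirected multigraph, meaning that for any two vertices of W there is a sequence of vertices of W starting at one and ending at the other in which each consecutive pair is joined by some arc of Γ (in either direction). Then there exists a vertex w ∈ W such that for every v ∈ W, the node fb(w) lies on the unique path in T from r to fb(v). (This supports the footnote claim that any connected collection of arcs has the same minimum arc under all tree-based orderings.) -/

import Mathlib

open SimpleGraph

/-- `i` lies on the (unique) path in `T` from `r` to `j`. -/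
def OnPath {I : Type*} (T : SimpleGraph I) (r i j : I) : Prop :=
  ∀ p : T.Walk r j, p.IsPath → i ∈ p.support

/-- `j` is a descendant of `i` in the tree `T` rooted at `r`:
`j ≠ i` and `i` lies on the unique path from `r` to `j`. -/
def Descendant {I : Type*} (T : SimpleGraph I) (r i j : I) : Prop :=
  j ≠ i ∧ OnPath T r i j

/-- `j` belongs to the subtree rooted at `i` (i.e. `j` is `i` or a descendant of `i`). -/
def InSubtree {I : Type*} (T : SimpleGraph I) (r i j : I) : Prop :=
  j = i ∨ Descendant T r i j

/-- `p` is the parent of `i` in the tree `T` rooted at `r`: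
a neighbour of `i` lying on the unique path from `r` to `i`. -/
def IsParent {I : Type*} (T : SimpleGraph I) (r p i : I) : Prop :=
  T.Adj p i ∧ OnPath T r p i

/-- `(T, β)` is a tree decomposition of the finite directed multigraph
with arcs `a : A` running from `src a` to `tgt a`. -/
structure IsTreeDecomp {V A I : Type*} (src tgt : A → V) (T : SimpleGraph I)
    (β : I → Finset V) : Prop where
  isTree : T.IsTree
  bagV : ∀ v : V, ∃ i : I, v ∈ β i
  bagA : ∀ a : A, ∃ i : I, src a ∈ β i ∧ tgt a ∈ β i
  bagConn : ∀ v : V, (T.induce {i : I | v ∈ β i}).Connected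

/-- The vertex `v` is current at the node `i`. -/
def Current {V I : Type*} (β : I → Finset V) (i : I) (v : V) : Prop :=
  v ∈ β i

/-- The vertex `v` is forgotten at the node `i`: it is not in `β i`, but lies in the
bag of some descendant of `i`. -/
def Forgotten {V I : Type*} (T : SimpleGraph I) (r : I) (β : I → Finset V)
    (i : I) (v : V) : Prop :=
  v ∉ β i ∧ ∃ j : I, Descendant T r i j ∧ v ∈ β j

/-- The vertex `v` is unvisited at the node `i`: it lies in no bag of the subtree
rooted at `i`. -/
def Unvisited {V I : Type*} (T : SimpleGraph I) (r : I) (β : I → Finset V)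
    (i : I) (v : V) : Prop :=
  ∀ j : I, InSubtree T r i j → v ∉ β j

/-- `i` is the forget bag of the vertex `v` (for a rooted tree decomposition whose
root bag is empty): `i ≠ r`, `v ∈ β i`, and `v` is not in the bag of the parent of `i`. -/
def IsForgetBag {V I : Type*} (T : SimpleGraph I) (r : I) (β : I → Finset V)
    (v : V) (i : I) : Prop :=
  i ≠ r ∧ v ∈ β i ∧ ∀ p : I, IsParent T r p i → v ∉ β p

/-- Two vertices are joined by some arc of the multigraph, in either direction. -/
def JoinedByArc {V A : Type*} (src tgt : A → V) (u w : V) : Prop :=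
  ∃ a : A, (src a = u ∧ tgt a = w) ∨ (src a = w ∧ tgt a = u)

section Aux

variable {I : Type*} {T : SimpleGraph I} {r : I}

lemma path_eq (hT : T.IsTree) {a b : I} {p q : T.Walk a b} (hp : p.IsPath) (hq : q.IsPath) :
    p = q :=
  (hT.existsUnique_path a b).unique hp hq

lemma onPath_iff (hT : T.IsTree) {i j : I} {p : T.Walk r j} (hp : p.IsPath) :
    OnPath T r i j ↔ i ∈ p.support := by
  constructor
  · exact fun h => h p hp
  · intro h q hq
    rwa [path_eq hT hq hp]

lemma onPath_refl (i : I) : OnPath T r i i := fun p _ => p.end_mem_support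

lemma onPath_trans (hT : T.IsTree) {i j k : I} (hij : OnPath T r i j)
    (hjk : OnPath T r j k) : OnPath T r i k := by
  classical
  intro p hp
  have hj : j ∈ p.support := hjk p hp
  exact p.support_takeUntil_subset hj (hij (p.takeUntil j hj) (hp.takeUntil hj))

lemma onPath_comparable (hT : T.IsTree) {i j k : I} (hik : OnPath T r i k)
    (hjk : OnPath T r j k) : OnPath T r i j ∨ OnPath T r j i := by
  classical
  obtain ⟨p, hp, -⟩ := hT.existsUnique_path r k
  have hi : i ∈ p.support := hik p hp
  have hj : j ∈ p.support := hjk p hp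
  by_cases h : i ∈ (p.takeUntil j hj).support
  · exact Or.inl ((onPath_iff hT (hp.takeUntil hj)).mpr h)
  · right
    have hid : i ∈ (p.dropUntil j hj).support := by
      have hsp := p.take_spec hj
      rw [← hsp, Walk.mem_support_append_iff] at hi
      tauto
    set t := p.takeUntil j hj with htdef
    set d := p.dropUntil j hj with hddef
    set dt := d.takeUntil i hid with hdtdef
    have hq : (t.append dt).IsPath := by
      rw [Walk.isPath_def, Walk.support_append]
      have hps : p.support = t.support ++ d.support.tail := by
        rw [← Walk.support_append, p.take_spec hj]
      have hds : d.support = dt.support ++ (d.dropUntil i hid).support.tail := by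
        rw [← Walk.support_append, d.take_spec hid]
      have h2 : d.support.tail = dt.support.tail ++ (d.dropUntil i hid).support.tail := by
        have h3 := hds
        rw [d.support_eq_cons, dt.support_eq_cons] at h3
        rw [List.cons_append] at h3
        exact (List.cons.inj h3).2
      have hnd := hp.support_nodup
      rw [hps, h2] at hnd
      exact hnd.sublist ((List.sublist_append_left _ _).append_left t.support)
    have hjmem : j ∈ (t.append dt).support :=
      Walk.subset_support_append_left _ _ t.end_mem_support
    exact (onPath_iff hT hq).mpr hjmem

lemma onPath_antisymm (hT : T.IsTree) {i j : I} (hij : OnPath T r i j)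
    (hji : OnPath T r j i) : i = j := by
  classical
  by_contra hne
  obtain ⟨p, hp, -⟩ := hT.existsUnique_path r j
  have hi : i ∈ p.support := hij p hp
  have hjt : j ∈ (p.takeUntil i hi).support := hji _ (hp.takeUntil hi)
  have hps : p.support = (p.takeUntil i hi).support ++ (p.dropUntil i hi).support.tail := by
    rw [← Walk.support_append, p.take_spec hi]
  have hnd := hp.support_nodup
  rw [hps] at hnd
  have hdisj := (List.nodup_append'.mp hnd).2.2
  have hjd : j ∈ (p.dropUntil i hi).support.tail := by
    have hjs : j ∈ (p.dropUntil i hi).support := Walk.end_mem_support _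
    rw [(p.dropUntil i hi).support_eq_cons, List.mem_cons] at hjs
    rcases hjs with h | h
    · exact absurd h.symm hne
    · exact h
  exact hdisj hjt hjd

lemma onPath_eq_of_length_le (hT : T.IsTree) {i j : I} {pi : T.Walk r i} {pj : T.Walk r j}
    (hpi : pi.IsPath) (hpj : pj.IsPath) (h : OnPath T r i j)
    (hlen : pj.length ≤ pi.length) : i = j := by
  classical
  have hi : i ∈ pj.support := h pj hpj
  have hpi' : pi = pj.takeUntil i hi := path_eq hT hpi (hpj.takeUntil hi)
  have hl : (pj.takeUntil i hi).length + (pj.dropUntil i hi).length = pj.length := by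
    rw [← Walk.length_append, pj.take_spec hi]
  have hlen' : pj.length ≤ (pj.takeUntil i hi).length := by rw [hpi'] at hlen; exact hlen
  have h0 : (pj.dropUntil i hi).length = 0 := by omega
  exact Walk.eq_of_length_eq_zero h0

end Aux

section Aux2

variable {V A : Type*} {I : Type*} {src tgt : A → V} {T : SimpleGraph I}
  {β : I → Finset V} {r : I}

lemma no_strict_ancestor (hTD : IsTreeDecomp src tgt T β) {v : V} {i t : I}
    (hfb : IsForgetBag T r β v i) (ht : v ∈ β t) (hti : OnPath T r t i)
    (hne : t ≠ i) : False := by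
  classical
  have hT := hTD.isTree
  obtain ⟨p, hp, -⟩ := hT.existsUnique_path r i
  have htp : t ∈ p.support := hti p hp
  set d := p.dropUntil t htp with hddef
  have hdp : d.IsPath := hp.dropUntil htp
  have hreach : (T.induce {k : I | v ∈ β k}).Reachable ⟨t, ht⟩ ⟨i, hfb.2.1⟩ :=
    (hTD.bagConn v).preconnected _ _
  obtain ⟨ω⟩ := hreach
  let ω' : T.Walk t i := ω.map (SimpleGraph.Embedding.induce {k : I | v ∈ β k}).toHom
  have hsupS : ∀ x ∈ ω'.support, v ∈ β x := by
    intro x hx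
    have hx' : x ∈ (ω.map (SimpleGraph.Embedding.induce {k : I | v ∈ β k}).toHom).support := hx
    rw [Walk.support_map, List.mem_map] at hx'
    obtain ⟨y, -, rfl⟩ := hx'
    exact y.2
  have hbp : ω'.bypass = d := path_eq hT ω'.bypass_isPath hdp
  have hdS : ∀ x ∈ d.support, v ∈ β x := by
    intro x hx
    rw [← hbp] at hx
    exact hsupS x (ω'.support_bypass_subset hx)
  obtain ⟨q, hadj, w', hrev⟩ := Walk.exists_eq_cons_of_ne (Ne.symm hne) d.reverse
  have hq : q ∈ d.support := by
    have : q ∈ d.reverse.support := by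
      rw [hrev]
      simp [Walk.support_cons]
    rwa [Walk.support_reverse, List.mem_reverse] at this
  have hparent : IsParent T r q i := by
    refine ⟨hadj.symm, ?_⟩
    have : q ∈ p.support := p.support_dropUntil_subset htp hq
    exact (onPath_iff hT hp).mpr this
  exact hfb.2.2 q hparent (hdS q hq)

lemma forgetBag_onPath (hTD : IsTreeDecomp src tgt T β) {v : V} {i : I}
    (hfb : IsForgetBag T r β v i) {m : I} (hm : v ∈ β m) : OnPath T r i m := by
  classical
  have hT := hTD.isTree
  have hreach : (T.induce {k : I | v ∈ β k}).Reachable ⟨m, hm⟩ ⟨i, hfb.2.1⟩ :=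
    (hTD.bagConn v).preconnected _ _
  obtain ⟨ω⟩ := hreach
  have key : ∀ (x y : {k : I | v ∈ β k})
      (ω : (T.induce {k : I | v ∈ β k}).Walk x y),
      OnPath T r i y.val → OnPath T r i x.val := by
    intro x y ω
    induction ω with
    | nil => exact id
    | @cons x y z hadj w ihw =>
      intro hz
      have ih : OnPath T r i y.val := ihw hz
      have hadjT : T.Adj x.val y.val := hadj
      obtain ⟨py, hpy, -⟩ := hT.existsUnique_path r y.val
      have hiy : i ∈ py.support := ih py hpy
      by_cases hx : x.val ∈ py.support
      · have hxy : OnPath T r x.val y.val := (onPath_iff hT hpy).mpr hx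
        rcases onPath_comparable hT ih hxy with h | h
        · exact h
        · by_cases hxi : x.val = i
          · rw [hxi]; exact onPath_refl i
          · exact (no_strict_ancestor hTD hfb x.2 h hxi).elim
      · have hq : (py.concat hadjT.symm).IsPath := by
          rw [Walk.isPath_def, Walk.support_concat]
          simp only [List.concat_eq_append, List.nodup_append, List.nodup_cons]
          exact ⟨hpy.support_nodup, by simp, fun a ha b hb h => hx (by rw [List.mem_singleton] at hb; rw [← hb, ← h]; exact ha)⟩
        refine (onPath_iff hT hq).mpr ?_
        rw [Walk.support_concat, List.mem_append]
        exact Or.inl hiy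
  exact key ⟨m, hm⟩ ⟨i, hfb.2.1⟩ ω (onPath_refl i)

lemma forgetBag_unique (hTD : IsTreeDecomp src tgt T β) {v : V} {i i' : I}
    (h : IsForgetBag T r β v i) (h' : IsForgetBag T r β v i') : i = i' :=
  onPath_antisymm hTD.isTree (forgetBag_onPath hTD h h'.2.1) (forgetBag_onPath hTD h' h.2.1)

end Aux2

/-- **Footnote claim.** Let `W` be a nonempty set of vertices that is connected in the
underlying undirected multigraph: any two vertices of `W` are connected by a sequence
of vertices of `W` in which consecutive vertices are joined by arcs.  Then there is a
vertex `w ∈ W` whose forget bag lies on the unique path from the root to the forget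
bag of every vertex of `W`. -/
theorem exists_min_forgetBag_of_connected {V A I : Type*}
    [Fintype V] [Fintype A] [Fintype I]
    (src tgt : A → V) (T : SimpleGraph I) (β : I → Finset V) (r : I)
    (hTD : IsTreeDecomp src tgt T β) (hroot : β r = ∅)
    (W : Set V) (hW : W.Nonempty)
    (hconn : ∀ x ∈ W, ∀ y ∈ W,
      Relation.ReflTransGen (fun u w => u ∈ W ∧ w ∈ W ∧ JoinedByArc src tgt u w) x y) :
    ∃ w ∈ W, ∀ v ∈ W, ∀ iw iv : I,
      IsForgetBag T r β w iw → IsForgetBag T r β v iv → OnPath T r iw iv := by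
  classical
  have hT := hTD.isTree
  by_cases hall : ∀ w ∈ W, ∃ i : I, IsForgetBag T r β w i
  swap
  · push_neg at hall
    obtain ⟨w, hw, hno⟩ := hall
    exact ⟨w, hw, fun v hv iw iv hiw hiv => absurd hiw (hno iw)⟩
  choose fb hfb using hall
  have hep : ∀ j : I, ∃ p : T.Walk r j, p.IsPath := fun j => (hT.existsUnique_path r j).exists
  choose P hP using hep
  set f : V → ℕ := fun v => if h : v ∈ W then (P (fb v h)).length else 0 with hfdef
  obtain ⟨w, hw, hmin⟩ := Set.exists_min_image W f (Set.toFinite W) hW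
  have key : ∀ v, Relation.ReflTransGen
      (fun u w => u ∈ W ∧ w ∈ W ∧ JoinedByArc src tgt u w) w v →
      ∀ hv : v ∈ W, OnPath T r (fb w hw) (fb v hv) := by
    intro v chain
    induction chain with
    | refl => intro hv; exact onPath_refl _
    | @tail b c hab hbc ih =>
      intro hv
      obtain ⟨hbW, hcW', a, harc⟩ := hbc
      have ihb : OnPath T r (fb w hw) (fb b hbW) := ih hbW
      have hbm : b ∈ β (hTD.bagA a).choose ∧ c ∈ β (hTD.bagA a).choose := by
        obtain ⟨h1, h2⟩ := (hTD.bagA a).choose_spec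
        rcases harc with ⟨rfl, rfl⟩ | ⟨rfl, rfl⟩
        · exact ⟨h1, h2⟩
        · exact ⟨h2, h1⟩
      have h1 : OnPath T r (fb b hbW) (hTD.bagA a).choose :=
        forgetBag_onPath hTD (hfb b hbW) hbm.1
      have h2 : OnPath T r (fb c hv) (hTD.bagA a).choose :=
        forgetBag_onPath hTD (hfb c hv) hbm.2
      rcases onPath_comparable hT h1 h2 with h | h
      · exact onPath_trans hT ihb h
      · rcases onPath_comparable hT ihb h with h' | h' 
        · exact h'
        · have heq : fb c hv = fb w hw := by
            refine onPath_eq_of_length_le hT (hP _) (hP _) h' ?_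
            have := hmin c hv
            simpa [hfdef, dif_pos hv, dif_pos hw] using this
          rw [heq]
          exact onPath_refl _
  refine ⟨w, hw, fun v hv iw iv hiw hiv => ?_⟩
  have h1 : iw = fb w hw := forgetBag_unique hTD hiw (hfb w hw)
  have h2 : iv = fb v hv := forgetBag_unique hTD hiv (hfb v hv)
  rw [h1, h2]
  exact key v (hconn w hw v hv) hv
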